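/- arXiv:1202.1930 — 4 statements merged into one kernel-verified Lean document; each statement's English description precedes it below -/
import Mathlib

section
/- If (φ_n) is a non-decreasing sequence of nonnegative supermartingale families indexed by stopping times (i.e., for each n and each stopping time θ, φ_n(θ) ≤ φ_{n+1}(θ) a.s.), then the family φ defined by φ(θ) := lim_n ↑ φ_n(θ) is a nonnegative supermartingale family. -/
open MeasureTheory Filter Set
open scoped ENNReal

variable {Ω : Type*}

/-- A stopping time of the filtration `F` with values in `[0, T]`. -/
structure StopT {m0 : MeasurableSpace Ω} (F : Filtration ℝ m0) (T : ℝ) where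
  t : Ω → ℝ
  isST : IsStoppingTime F (fun ω => (t ω : WithTop ℝ))
  mem : ∀ ω, t ω ∈ Set.Icc (0 : ℝ) T

variable {m0 : MeasurableSpace Ω} (F : Filtration ℝ m0) (T : ℝ) (μ : Measure Ω)

/-- An admissible family of `[0,∞]`-valued random variables indexed by stopping times. -/
def AdmissibleENN (φ : StopT F T → Ω → ℝ≥0∞) : Prop :=
  (∀ θ : StopT F T, Measurable[θ.isST.measurableSpace] (φ θ)) ∧
  ∀ θ θ' : StopT F T, ∀ᵐ ω ∂μ, θ.t ω = θ'.t ω → φ θ ω = φ θ' ω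

/-- `g` is (a version of) the conditional expectation of the nonnegative `f` with respect to `m`,
characterized by `m`-measurability and equality of the set integrals on `m`-measurable sets. -/
def IsLCondExp (m : MeasurableSpace Ω) (f g : Ω → ℝ≥0∞) : Prop :=
  Measurable[m] g ∧ ∀ s : Set Ω, MeasurableSet[m] s → ∫⁻ ω in s, g ω ∂μ = ∫⁻ ω in s, f ω ∂μ

/-- A nonnegative (`[0,∞]`-valued) supermartingale family:
`E[φ(θ) | F_{θ'}] ≤ φ(θ')` a.s. whenever `θ' ≤ θ` a.s. -/
def SupermartFamENN (φ : StopT F T → Ω → ℝ≥0∞) : Prop :=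
  AdmissibleENN F T μ φ ∧
  ∀ θ θ' : StopT F T, (∀ᵐ ω ∂μ, θ'.t ω ≤ θ.t ω) →
    ∃ g : Ω → ℝ≥0∞, IsLCondExp μ θ'.isST.measurableSpace (φ θ) g ∧ g ≤ᵐ[μ] φ θ'

/-- The increasing limit of a nondecreasing sequence of nonnegative supermartingale
families is a nonnegative supermartingale family. -/
theorem limit_of_nondecreasing_supermartingale_families
    (φn : ℕ → StopT F T → Ω → ℝ≥0∞)
    (hsm : ∀ n, SupermartFamENN F T μ (φn n))
    (hmono : ∀ n (θ : StopT F T), ∀ᵐ ω ∂μ, φn n θ ω ≤ φn (n + 1) θ ω) :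
    SupermartFamENN F T μ (fun θ ω => ⨆ n, φn n θ ω) := by
  constructor
  · constructor
    · intro θ
      exact Measurable.iSup fun n => (hsm n).1.1 θ
    · intro θ θ'
      have h : ∀ᵐ ω ∂μ, ∀ n, θ.t ω = θ'.t ω → φn n θ ω = φn n θ' ω :=
        ae_all_iff.mpr fun n => (hsm n).1.2 θ θ'
      filter_upwards [h] with ω hω heq
      exact iSup_congr fun n => hω n heq
  · intro θ θ' hle
    choose g hg hgle using fun n => (hsm n).2 θ θ' hle
    set m := θ'.isST.measurableSpace with hmdef
    have hm0 : m ≤ m0 := θ'.isST.measurableSpace_le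
    have hθm0 : θ.isST.measurableSpace ≤ m0 := θ.isST.measurableSpace_le
    have hgmeas : ∀ n, Measurable[m] (g n) := fun n => (hg n).1
    have hgmeas0 : ∀ n, Measurable[m0] (g n) := fun n => (hgmeas n).mono hm0 le_rfl
    have hφmeas0 : ∀ n, Measurable[m0] (φn n θ) :=
      fun n => ((hsm n).1.1 θ).mono hθm0 le_rfl
    -- the target function
    set f : Ω → ℝ≥0∞ := fun ω => ⨆ n, φn n θ ω with hfdef
    have hφlef : ∀ n ω, φn n θ ω ≤ f ω := fun n ω => le_iSup (fun k => φn k θ ω) n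
    -- running maxima of the g's
    set G : ℕ → Ω → ℝ≥0∞ :=
      fun N => Nat.rec (g 0) (fun k Gk ω => max (Gk ω) (g (k + 1) ω)) N with hGdef
    have hG0 : G 0 = g 0 := rfl
    have hGsucc : ∀ N ω, G (N + 1) ω = max (G N ω) (g (N + 1) ω) := fun N ω => rfl
    have hGmeas : ∀ N, Measurable[m] (G N) := by
      intro N
      induction N with
      | zero => exact hgmeas 0
      | succ k ih => exact Measurable.max ih (hgmeas (k + 1))
    have hGmeas0 : ∀ N, Measurable[m0] (G N) := fun N => (hGmeas N).mono hm0 le_rfl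
    have hGmono : Monotone G := by
      refine monotone_nat_of_le_succ fun N ω => ?_
      rw [hGsucc]
      exact le_max_left _ _
    have hgleG : ∀ n ω, g n ω ≤ G n ω := by
      intro n
      induction n with
      | zero => intro ω; exact le_rfl
      | succ k ih => intro ω; rw [hGsucc]; exact le_max_right _ _
    have hGlesup : ∀ N ω, G N ω ≤ ⨆ n, g n ω := by
      intro N
      induction N with
      | zero => intro ω; exact le_iSup (fun n => g n ω) 0
      | succ k ih =>
        intro ω; rw [hGsucc]
        exact max_le (ih ω) (le_iSup (fun n => g n ω) (k + 1))
    have hsupGeq : ∀ ω, (⨆ n, g n ω) = ⨆ N, G N ω := by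
      intro ω
      refine le_antisymm (iSup_le fun n => le_trans (hgleG n ω) (le_iSup (fun N => G N ω) n))
        (iSup_le fun N => hGlesup N ω)
    -- key upper bound by induction
    have key : ∀ N, ∀ s : Set Ω, MeasurableSet[m] s →
        ∫⁻ ω in s, G N ω ∂μ ≤ ∫⁻ ω in s, f ω ∂μ := by
      intro N
      induction N with
      | zero =>
        intro s hs
        rw [hG0, (hg 0).2 s hs]
        exact lintegral_mono fun ω => hφlef 0 ω
      | succ k ih =>
        intro s hs
        set t : Set Ω := {ω | G k ω ≤ g (k + 1) ω} with htdef
        have htm : MeasurableSet[m] t := measurableSet_le (hGmeas k) (hgmeas (k + 1))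
        have hA : MeasurableSet[m] (s ∩ t) := hs.inter htm
        have hB : MeasurableSet[m] (s \ t) := hs.diff htm
        have hsplit : ∫⁻ ω in s, G (k + 1) ω ∂μ
            = ∫⁻ ω in s ∩ t, G (k + 1) ω ∂μ + ∫⁻ ω in s \ t, G (k + 1) ω ∂μ :=
          (lintegral_inter_add_diff _ s (hm0 t htm)).symm
        have h1 : ∫⁻ ω in s ∩ t, G (k + 1) ω ∂μ ≤ ∫⁻ ω in s ∩ t, f ω ∂μ := by
          have heq : ∫⁻ ω in s ∩ t, G (k + 1) ω ∂μ = ∫⁻ ω in s ∩ t, g (k + 1) ω ∂μ := by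
            refine setLIntegral_congr_fun (hm0 _ hA) ?_
            intro ω hω
            rw [hGsucc]
            exact max_eq_right hω.2
          rw [heq, (hg (k + 1)).2 _ hA]
          exact lintegral_mono fun ω => hφlef (k + 1) ω
        have h2 : ∫⁻ ω in s \ t, G (k + 1) ω ∂μ ≤ ∫⁻ ω in s \ t, f ω ∂μ := by
          have heq : ∫⁻ ω in s \ t, G (k + 1) ω ∂μ = ∫⁻ ω in s \ t, G k ω ∂μ := by
            refine setLIntegral_congr_fun (hm0 _ hB) ?_
            intro ω hω
            rw [hGsucc]
            exact max_eq_left (le_of_not_ge hω.2)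
          rw [heq]
          exact ih _ hB
        calc ∫⁻ ω in s, G (k + 1) ω ∂μ
            = ∫⁻ ω in s ∩ t, G (k + 1) ω ∂μ + ∫⁻ ω in s \ t, G (k + 1) ω ∂μ := hsplit
          _ ≤ ∫⁻ ω in s ∩ t, f ω ∂μ + ∫⁻ ω in s \ t, f ω ∂μ := add_le_add h1 h2
          _ = ∫⁻ ω in s, f ω ∂μ := lintegral_inter_add_diff _ s (hm0 t htm)
    refine ⟨fun ω => ⨆ n, g n ω, ⟨Measurable.iSup hgmeas, ?_⟩, ?_⟩
    · intro s hs
      refine le_antisymm ?_ ?_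
      · -- upper bound
        have : ∫⁻ ω in s, ⨆ n, g n ω ∂μ = ⨆ N, ∫⁻ ω in s, G N ω ∂μ := by
          rw [show (fun ω => ⨆ n, g n ω) = fun ω => ⨆ N, G N ω from funext hsupGeq]
          exact lintegral_iSup (fun N => hGmeas0 N) hGmono
        rw [this]
        exact iSup_le fun N => key N s hs
      · -- lower bound
        have hmono' : ∀ᵐ ω ∂μ.restrict s, Monotone fun n => φn n θ ω := by
          refine ae_restrict_of_ae ?_
          have h : ∀ᵐ ω ∂μ, ∀ n, φn n θ ω ≤ φn (n + 1) θ ω :=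
            ae_all_iff.mpr fun n => hmono n θ
          filter_upwards [h] with ω hω
          exact monotone_nat_of_le_succ hω
        have hfs : ∫⁻ ω in s, f ω ∂μ = ⨆ n, ∫⁻ ω in s, φn n θ ω ∂μ :=
          lintegral_iSup' (fun n => (hφmeas0 n).aemeasurable) hmono'
        rw [hfs]
        refine iSup_le fun n => ?_
        rw [← (hg n).2 s hs]
        exact lintegral_mono fun ω => le_iSup (fun k => g k ω) n
    · have h : ∀ᵐ ω ∂μ, ∀ n, g n ω ≤ φn n θ' ω := ae_all_iff.mpr hgle
      filter_upwards [h] with ω hω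
      exact iSup_mono hω
end

section
/- If (φ_n) is a non-decreasing sequence of nonnegative supermartingale families, each of which is right-continuous in expectation along stopping times (right-CE), then the limit family φ(θ) := lim_n ↑ φ_n(θ) is a right-CE supermartingale family. -/
open MeasureTheory Filter Set
open scoped ENNReal

variable {Ω : Type*}

variable {m0 : MeasurableSpace Ω} (F : Filtration ℝ m0) (T : ℝ) (μ : Measure Ω)

/-- `θs` is a nonincreasing sequence of stopping times converging to `θ` (θ_n ↓ θ). -/
def DecrTo (θs : ℕ → StopT F T) (θ : StopT F T) : Prop :=
  (∀ n ω, (θs (n + 1)).t ω ≤ (θs n).t ω) ∧ (∀ n ω, θ.t ω ≤ (θs n).t ω) ∧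
  ∀ ω, Tendsto (fun n => (θs n).t ω) atTop (nhds (θ.t ω))

/-- `φ` is right-continuous in expectation along stopping times (`[0,∞]`-valued case). -/
def RightCE_ENN (φ : StopT F T → Ω → ℝ≥0∞) : Prop :=
  ∀ (θ : StopT F T) (θs : ℕ → StopT F T), DecrTo F T θs θ →
    Tendsto (fun n => ∫⁻ ω, φ (θs n) ω ∂μ) atTop (nhds (∫⁻ ω, φ θ ω ∂μ))

/-- The increasing limit of a nondecreasing sequence of right-CE nonnegative
supermartingale families is a right-CE supermartingale family. -/
theorem limit_of_nondecreasing_rightCE_supermartingale_families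
    (φn : ℕ → StopT F T → Ω → ℝ≥0∞)
    (hsm : ∀ n, SupermartFamENN F T μ (φn n))
    (hrce : ∀ n, RightCE_ENN F T μ (φn n))
    (hmono : ∀ n (θ : StopT F T), ∀ᵐ ω ∂μ, φn n θ ω ≤ φn (n + 1) θ ω) :
    SupermartFamENN F T μ (fun θ ω => ⨆ n, φn n θ ω) ∧
    RightCE_ENN F T μ (fun θ ω => ⨆ n, φn n θ ω) := by

  classical
  set φ : StopT F T → Ω → ℝ≥0∞ := fun θ ω => ⨆ n, φn n θ ω with hφdef
  -- measurability of the pieces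
  have hmeasm : ∀ (n : ℕ) (θ : StopT F T), Measurable[θ.isST.measurableSpace] (φn n θ) :=
    fun n θ => (hsm n).1.1 θ
  have hmeas0 : ∀ (n : ℕ) (θ : StopT F T), Measurable (φn n θ) :=
    fun n θ => (hmeasm n θ).mono θ.isST.measurableSpace_le le_rfl
  have hφmeasm : ∀ θ : StopT F T, Measurable[θ.isST.measurableSpace] (φ θ) :=
    fun θ => Measurable.iSup (fun n => hmeasm n θ)
  -- a.e. monotonicity
  have hmono' : ∀ θ : StopT F T, ∀ᵐ ω ∂μ, Monotone fun n => φn n θ ω := by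
    intro θ
    filter_upwards [ae_all_iff.2 (fun n => hmono n θ)] with ω h
    exact monotone_nat_of_le_succ h
  -- monotone convergence on every set
  have hMCT : ∀ (θ : StopT F T) (s : Set Ω),
      ∫⁻ ω in s, φ θ ω ∂μ = ⨆ n, ∫⁻ ω in s, φn n θ ω ∂μ := by
    intro θ s
    exact lintegral_iSup' (fun n => (hmeas0 n θ).aemeasurable)
      (ae_restrict_of_ae (hmono' θ))
  -- admissibility of the limit
  have hadm : AdmissibleENN F T μ φ := by
    refine ⟨hφmeasm, fun θ θ' => ?_⟩
    filter_upwards [ae_all_iff.2 (fun n => (hsm n).1.2 θ θ')] with ω h heq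
    exact iSup_congr fun n => h n heq
  -- supermartingale property of the limit
  have hsup : ∀ θ θ' : StopT F T, (∀ᵐ ω ∂μ, θ'.t ω ≤ θ.t ω) →
      ∃ g : Ω → ℝ≥0∞, IsLCondExp μ θ'.isST.measurableSpace (φ θ) g ∧ g ≤ᵐ[μ] φ θ' := by
    intro θ θ' hle
    choose g hg hgle using fun n => (hsm n).2 θ θ' hle
    have hmle : θ'.isST.measurableSpace ≤ m0 := θ'.isST.measurableSpace_le
    -- running maxima of the conditional expectations
    set G : ℕ → Ω → ℝ≥0∞ :=
      fun n => Nat.rec (g 0) (fun k Gk => fun ω => max (Gk ω) (g (k + 1) ω)) n with hG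
    have hGzero : G 0 = g 0 := rfl
    have hGsucc : ∀ n, G (n + 1) = fun ω => max (G n ω) (g (n + 1) ω) := fun n => rfl
    have hGmeas : ∀ n, Measurable[θ'.isST.measurableSpace] (G n) := by
      intro n
      induction n with
      | zero => exact (hg 0).1
      | succ k ih => exact Measurable.max ih (hg (k + 1)).1
    have hGmono : ∀ n ω, G n ω ≤ G (n + 1) ω := fun n ω => le_max_left _ _
    have hgleG : ∀ n ω, g n ω ≤ G n ω := by
      intro n ω
      cases n with
      | zero => exact le_rfl
      | succ k => exact le_max_right _ _
    have hGle : ∀ n ω, G n ω ≤ ⨆ k, g k ω := by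
      intro n
      induction n with
      | zero => exact fun ω => le_iSup (fun k => g k ω) 0
      | succ k ih => exact fun ω => max_le (ih ω) (le_iSup (fun j => g j ω) (k + 1))
    have hGsup : ∀ ω, (⨆ n, G n ω) = ⨆ n, g n ω := by
      intro ω
      refine le_antisymm (iSup_le fun n => hGle n ω) (iSup_le fun n => le_trans (hgleG n ω) (le_iSup (fun k => G k ω) n))
    -- key estimate: ∫_s G n ≤ ∫_s g n on m-measurable sets
    have hkey : ∀ n, ∀ s : Set Ω, MeasurableSet[θ'.isST.measurableSpace] s →
        ∫⁻ ω in s, G n ω ∂μ ≤ ∫⁻ ω in s, g n ω ∂μ := by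
      intro n
      induction n with
      | zero => exact fun s _ => le_rfl
      | succ k ih =>
        intro s hs
        -- split on A = {g (k+1) < G k}
        set A : Set Ω := {ω | g (k + 1) ω < G k ω} with hA
        have hAm : MeasurableSet[θ'.isST.measurableSpace] A :=
          measurableSet_lt (hg (k + 1)).1 (hGmeas k)
        have hA0 : MeasurableSet A := hmle A hAm
        have hs0 : MeasurableSet s := hmle s hs
        have hsplit : ∫⁻ ω in s, G (k + 1) ω ∂μ =
            ∫⁻ ω in A ∩ s, G (k + 1) ω ∂μ + ∫⁻ ω in Aᶜ ∩ s, G (k + 1) ω ∂μ := by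
          rw [← Measure.restrict_restrict hA0, ← Measure.restrict_restrict hA0.compl,
            lintegral_add_compl _ hA0]
        have h1 : ∫⁻ ω in A ∩ s, G (k + 1) ω ∂μ ≤ ∫⁻ ω in A ∩ s, g (k + 1) ω ∂μ := by
          have he : ∫⁻ ω in A ∩ s, G (k + 1) ω ∂μ = ∫⁻ ω in A ∩ s, G k ω ∂μ := by
            refine setLIntegral_congr_fun (hA0.inter hs0) ?_
            intro ω hω
            exact max_eq_left (le_of_lt hω.1)
          rw [he]
          -- ∫_{A∩s} G k ≤ ∫_{A∩s} g k = ∫_{A∩s} φn k θ ≤ ∫_{A∩s} φn (k+1) θ = ∫_{A∩s} g (k+1)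
          have hasm : MeasurableSet[θ'.isST.measurableSpace] (A ∩ s) := hAm.inter hs
          calc ∫⁻ ω in A ∩ s, G k ω ∂μ ≤ ∫⁻ ω in A ∩ s, g k ω ∂μ := ih _ hasm
            _ = ∫⁻ ω in A ∩ s, φn k θ ω ∂μ := (hg k).2 _ hasm
            _ ≤ ∫⁻ ω in A ∩ s, φn (k + 1) θ ω ∂μ :=
                lintegral_mono_ae (ae_restrict_of_ae (hmono k θ))
            _ = ∫⁻ ω in A ∩ s, g (k + 1) ω ∂μ := ((hg (k + 1)).2 _ hasm).symm
        have h2 : ∫⁻ ω in Aᶜ ∩ s, G (k + 1) ω ∂μ = ∫⁻ ω in Aᶜ ∩ s, g (k + 1) ω ∂μ := by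
          refine setLIntegral_congr_fun (hA0.compl.inter hs0) ?_
          intro ω hω
          exact max_eq_right (le_of_not_gt hω.1)
        calc ∫⁻ ω in s, G (k + 1) ω ∂μ
            = ∫⁻ ω in A ∩ s, G (k + 1) ω ∂μ + ∫⁻ ω in Aᶜ ∩ s, G (k + 1) ω ∂μ := hsplit
          _ ≤ ∫⁻ ω in A ∩ s, g (k + 1) ω ∂μ + ∫⁻ ω in Aᶜ ∩ s, g (k + 1) ω ∂μ := by
              exact add_le_add h1 (le_of_eq h2)
          _ = ∫⁻ ω in s, g (k + 1) ω ∂μ := by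
              rw [← Measure.restrict_restrict hA0, ← Measure.restrict_restrict hA0.compl,
                lintegral_add_compl _ hA0]
      -- end induction
    have hGsupMeas : Measurable[θ'.isST.measurableSpace] fun ω => ⨆ n, G n ω :=
      Measurable.iSup hGmeas
    refine ⟨fun ω => ⨆ n, G n ω, ⟨hGsupMeas, ?_⟩, ?_⟩
    · intro s hs
      have hGmeas0 : ∀ n, Measurable (G n) := fun n => (hGmeas n).mono hmle le_rfl
      have hMCTG : ∫⁻ ω in s, (⨆ n, G n ω) ∂μ = ⨆ n, ∫⁻ ω in s, G n ω ∂μ :=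
        lintegral_iSup' (fun n => (hGmeas0 n).aemeasurable)
          (ae_of_all _ fun ω => monotone_nat_of_le_succ fun n => hGmono n ω)
      rw [hMCTG, hMCT θ s]
      refine le_antisymm (iSup_mono fun n => ?_) (iSup_mono fun n => ?_)
      · exact (hkey n s hs).trans (le_of_eq ((hg n).2 s hs))
      · calc ∫⁻ ω in s, φn n θ ω ∂μ = ∫⁻ ω in s, g n ω ∂μ := ((hg n).2 s hs).symm
          _ ≤ ∫⁻ ω in s, G n ω ∂μ := lintegral_mono fun ω => hgleG n ω
    · filter_upwards [ae_all_iff.2 hgle] with ω h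
      calc (⨆ n, G n ω) = ⨆ n, g n ω := hGsup ω
        _ ≤ ⨆ n, φn n θ' ω := iSup_mono fun n => h n
  have hsmφ : SupermartFamENN F T μ φ := ⟨hadm, hsup⟩
  refine ⟨hsmφ, ?_⟩
  -- right continuity in expectation
  intro θ θs hdec
  set c : ℝ≥0∞ := ∫⁻ ω, φ θ ω ∂μ with hc
  set u : ℕ → ℝ≥0∞ := fun k => ∫⁻ ω, φ (θs k) ω ∂μ with hu
  -- each u k ≤ c by the supermartingale property
  have hub : ∀ k, u k ≤ c := by
    intro k
    obtain ⟨g, hg, hgle⟩ := hsup (θs k) θ (ae_of_all _ fun ω => hdec.2.1 k ω)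
    have h1 : ∫⁻ ω, g ω ∂μ = ∫⁻ ω, φ (θs k) ω ∂μ := by
      have := hg.2 Set.univ MeasurableSet.univ
      simpa [Measure.restrict_univ] using this
    calc u k = ∫⁻ ω, g ω ∂μ := h1.symm
      _ ≤ ∫⁻ ω, φ θ ω ∂μ := lintegral_mono_ae hgle
  have hlimsup : limsup u atTop ≤ c :=
    limsup_le_of_le (by isBoundedDefault) (Eventually.of_forall hub)
  have hliminf : c ≤ liminf u atTop := by
    have hcs : c = ⨆ n, ∫⁻ ω, φn n θ ω ∂μ := by
      have := hMCT θ Set.univ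
      simpa [Measure.restrict_univ] using this
    rw [hcs]
    refine iSup_le fun n => ?_
    have htd : Tendsto (fun k => ∫⁻ ω, φn n (θs k) ω ∂μ) atTop
        (nhds (∫⁻ ω, φn n θ ω ∂μ)) := hrce n θ θs hdec
    have hle2 : ∀ k, ∫⁻ ω, φn n (θs k) ω ∂μ ≤ u k :=
      fun k => lintegral_mono fun ω => le_iSup (fun j => φn j (θs k) ω) n
    calc ∫⁻ ω, φn n θ ω ∂μ
        = liminf (fun k => ∫⁻ ω, φn n (θs k) ω ∂μ) atTop := htd.liminf_eq.symm
      _ ≤ liminf u atTop := liminf_le_liminf (Eventually.of_forall hle2)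
  have h1 : liminf u atTop = c :=
    le_antisymm ((liminf_le_limsup).trans hlimsup) hliminf
  have h2 : limsup u atTop = c :=
    le_antisymm hlimsup (hliminf.trans liminf_le_limsup)
  exact tendsto_of_liminf_eq_limsup h1 h2
end

section
/- If J(0) < +∞, then the admissible family Y := J − J' satisfies ξ ≤ Y ≤ ζ; in particular ξ(θ) ≤ ζ(θ) a.s. for every stopping time θ. Hence if there exists a stopping time ν with P(ξ(ν) > ζ(ν)) > 0, then J(0) = J'(0) = +∞. -/
open MeasureTheory Filter Set
open scoped ENNReal

variable {Ω : Type*}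

variable {m0 : MeasurableSpace Ω} (F : Filtration ℝ m0) (T : ℝ) (μ : Measure Ω)

/-- An admissible family of real-valued random variables indexed by stopping times. -/
def AdmissibleR (φ : StopT F T → Ω → ℝ) : Prop :=
  (∀ θ : StopT F T, StronglyMeasurable[θ.isST.measurableSpace] (φ θ)) ∧
  ∀ θ θ' : StopT F T, ∀ᵐ ω ∂μ, θ.t ω = θ'.t ω → φ θ ω = φ θ' ω

/-- The integrability condition `E[ess sup_θ φ(θ)⁻] < ∞`: the negative parts are dominated
a.s. by a single integrable random variable. -/
def IntegCondNeg (φ : StopT F T → Ω → ℝ) : Prop :=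
  ∃ g : Ω → ℝ, Integrable g μ ∧ ∀ θ : StopT F T, ∀ᵐ ω ∂μ, max (-(φ θ ω)) 0 ≤ g ω

/-- The integrability condition `E[ess sup_θ φ(θ)⁺] < ∞`. -/
def IntegCondPos (φ : StopT F T → Ω → ℝ) : Prop :=
  ∃ g : Ω → ℝ, Integrable g μ ∧ ∀ θ : StopT F T, ∀ᵐ ω ∂μ, max (φ θ ω) 0 ≤ g ω

/-- The positive part of an extended real, as an element of `[0,∞]`. -/
noncomputable def erealPos (x : EReal) : ℝ≥0∞ :=
  if x = ⊤ then ⊤ else ENNReal.ofReal x.toReal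

/-- An admissible family of extended-real-valued random variables indexed by stopping times. -/
def AdmissibleER (φ : StopT F T → Ω → EReal) : Prop :=
  (∀ θ : StopT F T, Measurable[θ.isST.measurableSpace] (φ θ)) ∧
  ∀ θ θ' : StopT F T, ∀ᵐ ω ∂μ, θ.t ω = θ'.t ω → φ θ ω = φ θ' ω

/-- `g` is (a version of) the (generalized) conditional expectation of the extended-real-valued
`f` (whose negative part is integrable) with respect to `m`: `g` is `m`-measurable, has
integrable negative part, and `∫_s f = ∫_s g` for every `m`-measurable set `s`
(the equality of the integrals being written with the positive and negative parts separated). -/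
def IsCondExpER (m : MeasurableSpace Ω) (f g : Ω → EReal) : Prop :=
  Measurable[m] g ∧
  Integrable (fun ω => (erealPos (-f ω)).toReal) μ ∧
  Integrable (fun ω => (erealPos (-g ω)).toReal) μ ∧
  ∀ s : Set Ω, MeasurableSet[m] s →
    (∫⁻ ω in s, erealPos (f ω) ∂μ) + ENNReal.ofReal (∫ ω in s, (erealPos (-g ω)).toReal ∂μ)
      = (∫⁻ ω in s, erealPos (g ω) ∂μ) + ENNReal.ofReal (∫ ω in s, (erealPos (-f ω)).toReal ∂μ)

/-- `g` is the essential supremum of the family `(f i)`. -/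
def IsEssSupFamER {ι : Sort*} (f : ι → Ω → EReal) (g : Ω → EReal) : Prop :=
  AEMeasurable g μ ∧ (∀ i, f i ≤ᵐ[μ] g) ∧
  ∀ h : Ω → EReal, AEMeasurable h μ → (∀ i, f i ≤ᵐ[μ] h) → g ≤ᵐ[μ] h

/-- The stopping times that are a.s. greater than or equal to `θ` (the set `T_θ`). -/
def After (θ : StopT F T) : Type _ :=
  {τ : StopT F T // ∀ᵐ ω ∂μ, θ.t ω ≤ τ.t ω}

/-- A (possibly `+∞`-valued) supermartingale family in the extended reals. -/
def SupermartFamER (φ : StopT F T → Ω → EReal) : Prop :=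
  AdmissibleER F T μ φ ∧
  ∀ θ θ' : StopT F T, (∀ᵐ ω ∂μ, θ'.t ω ≤ θ.t ω) →
    ∃ g : Ω → EReal, IsCondExpER μ θ'.isST.measurableSpace (φ θ) g ∧ g ≤ᵐ[μ] φ θ'

/-- `J`, `J'` are nonnegative supermartingale families solving the system
`J = R(J' + ξ)`, `J' = R(J − ζ)` (extended-real-valued version). -/
def SnellFixER (ξ ζ : StopT F T → Ω → ℝ) (J J' : StopT F T → Ω → EReal) : Prop :=
  SupermartFamER F T μ J ∧ SupermartFamER F T μ J' ∧
  (∀ θ : StopT F T, ∀ᵐ ω ∂μ, 0 ≤ J θ ω) ∧ (∀ θ : StopT F T, ∀ᵐ ω ∂μ, 0 ≤ J' θ ω) ∧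
  (∀ θ : StopT F T, ∃ C : After F T μ θ → Ω → EReal,
      (∀ τ : After F T μ θ, IsCondExpER μ θ.isST.measurableSpace
          (fun ω => J' τ.1 ω + (ξ τ.1 ω : EReal)) (C τ)) ∧
      IsEssSupFamER μ C (J θ)) ∧
  (∀ θ : StopT F T, ∃ C : After F T μ θ → Ω → EReal,
      (∀ σ : After F T μ θ, IsCondExpER μ θ.isST.measurableSpace
          (fun ω => J σ.1 ω - (ζ σ.1 ω : EReal)) (C σ)) ∧
      IsEssSupFamER μ C (J' θ))


section AuxLemmas

lemma measurable_erealPos : Measurable erealPos := by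
  unfold erealPos
  exact Measurable.ite (measurableSet_singleton _) measurable_const
    (ENNReal.measurable_ofReal.comp measurable_ereal_toReal)

lemma erealPos_eq_top_iff {x : EReal} : erealPos x = ⊤ ↔ x = ⊤ := by
  unfold erealPos
  split_ifs with h
  · simp [h]
  · simp [h, ENNReal.ofReal_ne_top]

lemma erealPos_le_ofReal {x : EReal} {c : ℝ} (h : x ≤ (c : EReal)) :
    erealPos x ≤ ENNReal.ofReal c := by
  unfold erealPos
  split_ifs with htop
  · exact absurd (htop ▸ h) (by simp)
  · induction x with
    | bot => simp
    | coe y => exact ENNReal.ofReal_le_ofReal (by simpa [EReal.toReal_coe] using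
        (EReal.coe_le_coe_iff.1 h))
    | top => simp at htop

lemma ofReal_le_erealPos {x : EReal} {c : ℝ} (h : (c : EReal) ≤ x) :
    ENNReal.ofReal c ≤ erealPos x := by
  unfold erealPos
  split_ifs with htop
  · exact le_top
  · induction x with
    | bot => simp at h
    | coe y => exact ENNReal.ofReal_le_ofReal (by simpa [EReal.toReal_coe] using
        (EReal.coe_le_coe_iff.1 h))
    | top => simp at htop

lemma erealPos_eq_zero {x : EReal} (h : x ≤ 0) : erealPos x = 0 := by
  have : erealPos x ≤ ENNReal.ofReal 0 := erealPos_le_ofReal (by exact_mod_cast h)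
  simpa using this

lemma erealPos_ne_zero {x : EReal} (h : 0 < x) : erealPos x ≠ 0 := by
  unfold erealPos
  split_ifs with htop
  · simp
  · induction x with
    | bot => simp at h
    | coe y =>
      have : 0 < y := by exact_mod_cast h
      simp only [EReal.toReal_coe]
      exact (ENNReal.ofReal_pos.2 this).ne'
    | top => simp at htop

lemma ofReal_max_zero (c : ℝ) : ENNReal.ofReal (max c 0) = ENNReal.ofReal c := by
  rcases le_total c 0 with h | h
  · simp [max_eq_right h, ENNReal.ofReal_eq_zero.2 h]
  · simp [max_eq_left h]

variable {Ω' : Type*}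

lemma measurable_add_coe {m : MeasurableSpace Ω'} {h : Ω' → EReal} {c : Ω' → ℝ}
    (hh : Measurable[m] h) (hc : Measurable[m] c) :
    Measurable[m] (fun ω => h ω + (c ω : EReal)) := by
  have heq : (fun ω => h ω + (c ω : EReal)) =
      fun ω => if h ω = ⊤ then (⊤ : EReal) else if h ω = ⊥ then (⊥ : EReal)
        else (((h ω).toReal + c ω : ℝ) : EReal) := by
    funext ω
    by_cases h1 : h ω = ⊤
    · simp [h1, EReal.top_add_coe]
    · by_cases h2 : h ω = ⊥
      · simp [h1, h2, EReal.bot_add]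
      · rw [if_neg h1, if_neg h2, EReal.coe_add, EReal.coe_toReal h1 h2]
  rw [heq]
  refine Measurable.ite (hh (measurableSet_singleton _)) measurable_const ?_
  refine Measurable.ite (hh (measurableSet_singleton _)) measurable_const ?_
  exact measurable_coe_real_ereal.comp ((measurable_ereal_toReal.comp hh).add hc)

lemma condExpER_le_max {m : MeasurableSpace Ω'} {mΩ : MeasurableSpace Ω'} {μ : Measure Ω'}
    [IsFiniteMeasure μ] (hm : m ≤ mΩ)
    {f g : Ω' → EReal} (hf : Measurable[m] f) (hg : Measurable[m] g)
    (hFm : Integrable (fun ω => (erealPos (-f ω)).toReal) μ)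
    (hG : Integrable (fun ω => (erealPos (-g ω)).toReal) μ)
    (hid : ∀ s : Set Ω', MeasurableSet[m] s →
      (∫⁻ ω in s, erealPos (f ω) ∂μ) + ENNReal.ofReal (∫ ω in s, (erealPos (-g ω)).toReal ∂μ)
        = (∫⁻ ω in s, erealPos (g ω) ∂μ) + ENNReal.ofReal (∫ ω in s, (erealPos (-f ω)).toReal ∂μ)) :
    ∀ᵐ ω ∂μ, f ω ≤ max (g ω) 0 := by
  have hf0 : Measurable[mΩ] f := hf.mono hm le_rfl
  have hg0 : Measurable[mΩ] g := hg.mono hm le_rfl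
  -- the bottom piece
  set s₀ : Set Ω' := {ω | 0 < f ω} ∩ {ω | g ω = ⊥} with hs₀def
  have hs₀m : MeasurableSet[m] s₀ :=
    (measurableSet_lt measurable_const hf).inter (hg (measurableSet_singleton ⊥))
  have hs₀ : MeasurableSet[mΩ] s₀ := hm _ hs₀m
  have hμs₀ : μ s₀ = 0 := by
    have hid0 := hid s₀ hs₀m
    have e1 : ∫ ω in s₀, (erealPos (-g ω)).toReal ∂μ = 0 := by
      rw [setIntegral_congr_fun hs₀ (g := fun _ => (0:ℝ)) fun ω hω => by
        have hng : -g ω = ⊤ := by rw [hω.2]; exact EReal.neg_bot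
        simp [hng, erealPos]]
      simp
    have e2 : ∫ ω in s₀, (erealPos (-f ω)).toReal ∂μ = 0 := by
      rw [setIntegral_congr_fun hs₀ (g := fun _ => (0:ℝ)) fun ω hω => by
        have hneg : -f ω ≤ 0 := by
          rw [show (0:EReal) = -0 by simp]
          exact EReal.neg_le_neg_iff.2 hω.1.le
        simp [erealPos_eq_zero hneg]]
      simp
    have e3 : ∫⁻ ω in s₀, erealPos (g ω) ∂μ = 0 := by
      rw [setLIntegral_congr_fun (g := fun _ => (0:ℝ≥0∞)) hs₀ (fun ω hω => by
        rw [hω.2]; exact erealPos_eq_zero bot_le)]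
      simp
    rw [e1, e2, e3] at hid0
    simp only [ENNReal.ofReal_zero, add_zero, zero_add] at hid0
    have hmeas : Measurable[mΩ] (fun ω => erealPos (f ω)) := measurable_erealPos.comp hf0
    have hz := (lintegral_eq_zero_iff (μ := μ.restrict s₀) hmeas).1 hid0
    have hfalse : ∀ᵐ ω ∂μ.restrict s₀, False := by
      filter_upwards [hz, ae_restrict_mem hs₀] with ω h1 h2
      exact erealPos_ne_zero h2.1 h1
    have h3 := ae_iff.1 hfalse
    simp only [not_false_iff, setOf_true] at h3
    rwa [Measure.restrict_apply_univ] at h3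
  -- rational triple pieces
  have hS : ∀ a q r : ℚ, (q:ℝ) < (r:ℝ) →
      μ ({ω | ((a:ℝ):EReal) ≤ g ω} ∩ {ω | g ω ≤ ((q:ℝ):EReal)} ∩ {ω | ((r:ℝ):EReal) ≤ f ω}) = 0 := by
    intro a q r hqr
    set s : Set Ω' := {ω | ((a:ℝ):EReal) ≤ g ω} ∩ {ω | g ω ≤ ((q:ℝ):EReal)} ∩ {ω | ((r:ℝ):EReal) ≤ f ω}
      with hsdef
    have hsm : MeasurableSet[m] s :=
      ((measurableSet_le measurable_const hg).inter (measurableSet_le hg measurable_const)).inter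
        (measurableSet_le measurable_const hf)
    have hs : MeasurableSet[mΩ] s := hm _ hsm
    have hids := hid s hsm
    have lb1 : ENNReal.ofReal (r:ℝ) * μ s ≤ ∫⁻ ω in s, erealPos (f ω) ∂μ := by
      rw [← setLIntegral_const s (ENNReal.ofReal (r:ℝ))]
      refine lintegral_mono_ae ?_
      filter_upwards [ae_restrict_mem hs] with ω hω
      exact ofReal_le_erealPos hω.2
    have lb2 : ENNReal.ofReal (max (-(q:ℝ)) 0) * μ s
        ≤ ENNReal.ofReal (∫ ω in s, (erealPos (-g ω)).toReal ∂μ) := by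
      rw [ofReal_integral_eq_lintegral_ofReal hG.restrict
        (ae_of_all _ fun ω => ENNReal.toReal_nonneg), ← setLIntegral_const]
      refine lintegral_mono_ae ?_
      filter_upwards [ae_restrict_mem hs] with ω hω
      have h1 : ENNReal.ofReal (-(q:ℝ)) ≤ erealPos (-g ω) := by
        refine ofReal_le_erealPos ?_
        rw [EReal.coe_neg]
        exact EReal.neg_le_neg_iff.2 hω.1.2
      have h2 : erealPos (-g ω) ≠ ⊤ := by
        refine ne_of_lt (lt_of_le_of_lt (erealPos_le_ofReal (c := -(a:ℝ)) ?_) ENNReal.ofReal_lt_top)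
        rw [EReal.coe_neg]
        exact EReal.neg_le_neg_iff.2 hω.1.1
      calc ENNReal.ofReal (max (-(q:ℝ)) 0)
          = ENNReal.ofReal ((ENNReal.ofReal (-(q:ℝ))).toReal) := by
            rw [ENNReal.toReal_ofReal']
        _ ≤ ENNReal.ofReal ((erealPos (-g ω)).toReal) :=
            ENNReal.ofReal_le_ofReal (ENNReal.toReal_mono h2 h1)
    have ub1 : ∫⁻ ω in s, erealPos (g ω) ∂μ ≤ ENNReal.ofReal (q:ℝ) * μ s := by
      rw [← setLIntegral_const s (ENNReal.ofReal (q:ℝ))]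
      refine lintegral_mono_ae ?_
      filter_upwards [ae_restrict_mem hs] with ω hω
      exact erealPos_le_ofReal hω.1.2
    have ub2 : ENNReal.ofReal (∫ ω in s, (erealPos (-f ω)).toReal ∂μ)
        ≤ ENNReal.ofReal (max (-(r:ℝ)) 0) * μ s := by
      rw [ofReal_integral_eq_lintegral_ofReal hFm.restrict
        (ae_of_all _ fun ω => ENNReal.toReal_nonneg), ← setLIntegral_const]
      refine lintegral_mono_ae ?_
      filter_upwards [ae_restrict_mem hs] with ω hω
      have h1 : erealPos (-f ω) ≤ ENNReal.ofReal (-(r:ℝ)) := by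
        refine erealPos_le_ofReal ?_
        rw [EReal.coe_neg]
        exact EReal.neg_le_neg_iff.2 hω.2
      calc ENNReal.ofReal ((erealPos (-f ω)).toReal)
          ≤ ENNReal.ofReal ((ENNReal.ofReal (-(r:ℝ))).toReal) :=
            ENNReal.ofReal_le_ofReal (ENNReal.toReal_mono ENNReal.ofReal_ne_top h1)
        _ = ENNReal.ofReal (max (-(r:ℝ)) 0) := by rw [ENNReal.toReal_ofReal']
    by_contra hne
    have hA : (ENNReal.ofReal (r:ℝ) + ENNReal.ofReal (max (-(q:ℝ)) 0)) * μ s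
        ≤ (ENNReal.ofReal (q:ℝ) + ENNReal.ofReal (max (-(r:ℝ)) 0)) * μ s := by
      rw [add_mul, add_mul]
      calc ENNReal.ofReal (r:ℝ) * μ s + ENNReal.ofReal (max (-(q:ℝ)) 0) * μ s
          ≤ (∫⁻ ω in s, erealPos (f ω) ∂μ)
            + ENNReal.ofReal (∫ ω in s, (erealPos (-g ω)).toReal ∂μ) := add_le_add lb1 lb2
        _ = (∫⁻ ω in s, erealPos (g ω) ∂μ)
            + ENNReal.ofReal (∫ ω in s, (erealPos (-f ω)).toReal ∂μ) := hids
        _ ≤ ENNReal.ofReal (q:ℝ) * μ s + ENNReal.ofReal (max (-(r:ℝ)) 0) * μ s :=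
            add_le_add ub1 ub2
    have hreal : max (q:ℝ) 0 + max (-(r:ℝ)) 0 < max (r:ℝ) 0 + max (-(q:ℝ)) 0 := by
      simp only [max_def]
      split_ifs <;> linarith
    have hstrict : ENNReal.ofReal (q:ℝ) + ENNReal.ofReal (max (-(r:ℝ)) 0)
        < ENNReal.ofReal (r:ℝ) + ENNReal.ofReal (max (-(q:ℝ)) 0) := by
      rw [← ofReal_max_zero (q:ℝ), ← ofReal_max_zero (r:ℝ),
        ← ENNReal.ofReal_add (le_max_right _ _) (le_max_right _ _),
        ← ENNReal.ofReal_add (le_max_right _ _) (le_max_right _ _)]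
      refine (ENNReal.ofReal_lt_ofReal_iff ?_).2 hreal
      exact lt_of_le_of_lt (add_nonneg (le_max_right _ _) (le_max_right _ _)) hreal
    exact absurd hA (not_le.2 (ENNReal.mul_lt_mul_left hne (measure_ne_top μ s) hstrict))
  -- countable union
  set S : {t : ℚ × ℚ × ℚ // t.2.1 < t.2.2} → Set Ω' := fun t =>
    {ω | ((t.1.1:ℝ):EReal) ≤ g ω} ∩ {ω | g ω ≤ ((t.1.2.1:ℝ):EReal)}
      ∩ {ω | ((t.1.2.2:ℝ):EReal) ≤ f ω} with hSdef
  have hSnull : μ (⋃ t, S t) = 0 :=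
    measure_iUnion_null fun t => hS t.1.1 t.1.2.1 t.1.2.2 (by exact_mod_cast t.2)
  have cover : {ω | max (g ω) 0 < f ω} ⊆ s₀ ∪ ⋃ t, S t := by
    intro ω hω
    simp only [mem_setOf_eq] at hω
    by_cases hb : g ω = ⊥
    · exact Or.inl ⟨lt_of_le_of_lt (le_max_right _ _) hω, hb⟩
    · refine Or.inr ?_
      have hgf : g ω < f ω := lt_of_le_of_lt (le_max_left _ _) hω
      obtain ⟨u, hu1, hu2⟩ := EReal.exists_between_coe_real hgf
      obtain ⟨v, hv1, hv2⟩ := EReal.exists_between_coe_real hu2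
      have huv : u < v := by exact_mod_cast hv1
      obtain ⟨w, hw1, hw2⟩ := EReal.exists_between_coe_real (bot_lt_iff_ne_bot.2 hb)
      obtain ⟨a, ha⟩ := exists_rat_lt w
      obtain ⟨q, hq1, hq2⟩ := exists_rat_btwn huv
      obtain ⟨r, hr1, hr2⟩ := exists_rat_btwn hq2
      refine mem_iUnion.2 ⟨⟨(a, q, r), by exact_mod_cast hr1⟩, ?_, ?_⟩
      · constructor
        · exact le_of_lt (lt_trans (by exact_mod_cast ha : ((a:ℝ):EReal) < (w:EReal)) hw2)
        · exact le_of_lt (lt_trans hu1 (by exact_mod_cast hq1))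
      · exact le_of_lt (lt_trans (by exact_mod_cast hr2) hv2)
  refine ae_iff.2 ?_
  simp only [not_le]
  exact measure_mono_null cover (measure_union_null hμs₀ hSnull)

lemma exists_ae_le_nat' {m : MeasurableSpace Ω'} {mΩ : MeasurableSpace Ω'} {μ : Measure Ω'}
    [IsFiniteMeasure μ] (hm : m ≤ mΩ)
    (h01 : ∀ s : Set Ω', MeasurableSet[m] s → μ s = 0 ∨ μ s = 1)
    {g : Ω' → EReal} (hg : Measurable[m] g) (hlt : ∀ᵐ ω ∂μ, g ω < ⊤) :
    ∃ n : ℕ, ∀ᵐ ω ∂μ, g ω ≤ ((n : ℝ) : EReal) := by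
  by_cases huniv : μ Set.univ = 0
  · exact ⟨0, ae_iff.2 (measure_mono_null (Set.subset_univ _) huniv)⟩
  by_contra hno
  push_neg at hno
  set t : ℕ → Set Ω' := fun n => {ω | ((n:ℝ):EReal) < g ω} with htdef
  have htm : ∀ n, MeasurableSet[m] (t n) := fun n => measurableSet_lt measurable_const hg
  have hμuniv : μ Set.univ = 1 := (h01 _ MeasurableSet.univ).resolve_left huniv
  have h1 : ∀ n : ℕ, μ (t n) = 1 := by
    intro n
    refine (h01 _ (htm n)).resolve_left ?_
    intro h0
    refine hno n (ae_iff.2 ?_)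
    have : {ω | ¬ g ω ≤ ((n:ℝ):EReal)} = t n := by ext ω; simp [htdef, not_le]
    simp only [not_not]; exact h0
  have hcompl : ∀ n : ℕ, μ (t n)ᶜ = 0 := by
    intro n
    rw [measure_compl (hm _ (htm n)) (measure_ne_top μ _), hμuniv, h1 n, tsub_self]
  have hall : ∀ᵐ ω ∂μ, ∀ n : ℕ, ((n:ℝ):EReal) < g ω := by
    refine ae_all_iff.2 fun n => ae_iff.2 ?_
    have : {ω | ¬ ((n:ℝ):EReal) < g ω} = (t n)ᶜ := by ext ω; simp [htdef, not_lt]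
    rw [this]; exact hcompl n
  have hfalse : ∀ᵐ ω ∂μ, False := by
    filter_upwards [hall, hlt] with ω h1 h2
    by_cases hb : g ω = ⊥
    · exact absurd (hb ▸ h1 0) (by simp)
    · have hgy : g ω = ((g ω).toReal : EReal) := (EReal.coe_toReal h2.ne hb).symm
      obtain ⟨n, hn⟩ := exists_nat_ge (g ω).toReal
      have := h1 n
      rw [hgy] at this
      exact absurd (EReal.coe_lt_coe_iff.1 this) (not_lt.2 hn)
  have := ae_iff.1 hfalse
  simp only [not_false_iff, setOf_true] at this
  exact huniv this

lemma ae_lt_top_of_bounded' {mΩ : MeasurableSpace Ω'} {μ : Measure Ω'} [IsFiniteMeasure μ]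
    {f g : Ω' → EReal} (hf : Measurable[mΩ] f)
    {n : ℕ} (hn : ∀ᵐ ω ∂μ, g ω ≤ ((n:ℝ):EReal))
    (hid : (∫⁻ ω in Set.univ, erealPos (f ω) ∂μ)
        + ENNReal.ofReal (∫ ω in Set.univ, (erealPos (-g ω)).toReal ∂μ)
      = (∫⁻ ω in Set.univ, erealPos (g ω) ∂μ)
        + ENNReal.ofReal (∫ ω in Set.univ, (erealPos (-f ω)).toReal ∂μ)) :
    ∀ᵐ ω ∂μ, f ω < ⊤ := by
  rw [setLIntegral_univ, setLIntegral_univ] at hid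
  have hgbound : ∫⁻ ω, erealPos (g ω) ∂μ < ⊤ := by
    calc ∫⁻ ω, erealPos (g ω) ∂μ ≤ ∫⁻ _, ENNReal.ofReal (n:ℝ) ∂μ :=
          lintegral_mono_ae (hn.mono fun ω h => erealPos_le_ofReal h)
      _ = ENNReal.ofReal (n:ℝ) * μ Set.univ := lintegral_const _
      _ < ⊤ := ENNReal.mul_lt_top ENNReal.ofReal_lt_top (measure_lt_top μ _)
  have h1 : ∫⁻ ω, erealPos (f ω) ∂μ ≠ ⊤ := by
    refine ne_of_lt (lt_of_le_of_lt (le_add_right le_rfl) (lt_of_le_of_lt hid.le ?_))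
    exact ENNReal.add_lt_top.2 ⟨hgbound, ENNReal.ofReal_lt_top⟩
  filter_upwards [ae_lt_top (measurable_erealPos.comp hf) h1] with ω h
  exact lt_top_iff_ne_top.2 fun hw => absurd (erealPos_eq_top_iff.2 hw) h.ne

lemma ereal_sandwich {x y : EReal} {a b : ℝ}
    (h1 : y + (a:EReal) ≤ x) (h2 : x - (b:EReal) ≤ y)
    (hx0 : 0 ≤ x) (hy0 : 0 ≤ y) (hxt : x < ⊤) :
    (a:EReal) ≤ x - y ∧ x - y ≤ (b:EReal) := by
  have hyt : y ≠ ⊤ := by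
    intro h
    rw [h, EReal.top_add_coe] at h1
    exact absurd (top_le_iff.1 h1) hxt.ne
  have hxb : x ≠ ⊥ := fun h => by simp [h] at hx0
  have hyb : y ≠ ⊥ := fun h => by simp [h] at hy0
  have hx : x = ((x.toReal : ℝ) : EReal) := (EReal.coe_toReal hxt.ne hxb).symm
  have hy : y = ((y.toReal : ℝ) : EReal) := (EReal.coe_toReal hyt hyb).symm
  rw [hx, hy] at h1 h2 ⊢
  rw [← EReal.coe_add] at h1
  rw [← EReal.coe_sub] at h2 ⊢
  have h1' : y.toReal + a ≤ x.toReal := EReal.coe_le_coe_iff.1 h1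
  have h2' : x.toReal - b ≤ y.toReal := EReal.coe_le_coe_iff.1 h2
  constructor
  · exact EReal.coe_le_coe_iff.2 (by linarith)
  · exact EReal.coe_le_coe_iff.2 (by linarith)

lemma ereal_lt_top_of_sub_le {x y : EReal} {b : ℝ} (h2 : x - (b:EReal) ≤ y) (hyt : y < ⊤) :
    x < ⊤ := by
  refine lt_top_iff_ne_top.2 fun h => ?_
  rw [h, EReal.top_sub_coe] at h2
  exact absurd (top_le_iff.1 h2) hyt.ne

end AuxLemmas


/-- If `J(0) < ∞` then `Y = J − J'` satisfies `ξ ≤ Y ≤ ζ`; in particular `ξ(θ) ≤ ζ(θ)`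
a.s. for every stopping time `θ`. Hence, if `P(ξ(ν) > ζ(ν)) > 0` for some stopping time
`ν`, then `J(0) = J'(0) = +∞`. -/
theorem between_rewards_of_finite
    (ξ ζ : StopT F T → Ω → ℝ)
    (hξadm : AdmissibleR F T μ ξ) (hζadm : AdmissibleR F T μ ζ)
    (hξint : IntegCondNeg F T μ ξ) (hζint : IntegCondPos F T μ ζ)
    (θT : StopT F T) (hθT : ∀ ω, θT.t ω = T)
    (hξT : ∀ᵐ ω ∂μ, ξ θT ω = 0) (hζT : ∀ᵐ ω ∂μ, ζ θT ω = 0)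
    (J J' : StopT F T → Ω → EReal)
    (hfix : SnellFixER F T μ ξ ζ J J')
    (θ0 : StopT F T) (hθ0 : ∀ ω, θ0.t ω = 0)
    (htriv : ∀ s : Set Ω, MeasurableSet[F 0] s → μ s = 0 ∨ μ s = 1) :
    ((∀ᵐ ω ∂μ, J θ0 ω < ⊤) →
      (∀ θ : StopT F T, ∀ᵐ ω ∂μ,
        (ξ θ ω : EReal) ≤ J θ ω - J' θ ω ∧ J θ ω - J' θ ω ≤ (ζ θ ω : EReal)) ∧
      (∀ θ : StopT F T, ∀ᵐ ω ∂μ, ξ θ ω ≤ ζ θ ω)) ∧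
    ((∃ ν : StopT F T, μ {ω | ζ ν ω < ξ ν ω} ≠ 0) →
      (∀ᵐ ω ∂μ, J θ0 ω = ⊤) ∧ (∀ᵐ ω ∂μ, J' θ0 ω = ⊤)) := by
  classical
  obtain ⟨hJsm, hJ'sm, hJpos, hJ'pos, hfixJ, hfixJ'⟩ := hfix
  have hμuniv01 : μ Set.univ = 0 ∨ μ Set.univ = 1 := htriv _ MeasurableSet.univ
  haveI : IsFiniteMeasure μ := ⟨by rcases hμuniv01 with h | h <;> simp [h]⟩
  have hmle : ∀ θ : StopT F T, θ.isST.measurableSpace ≤ m0 := fun θ =>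
    θ.isST.measurableSpace_le
  have h01 : ∀ s : Set Ω, MeasurableSet[θ0.isST.measurableSpace] s → μ s = 0 ∨ μ s = 1 := by
    intro s hs
    refine htriv s ?_
    have h0 := ((θ0.isST.measurableSet s).1 hs).2 0
    have hseq : s ∩ {ω | ((θ0.t ω : ℝ) : WithTop ℝ) ≤ ((0 : ℝ) : WithTop ℝ)} = s := by
      ext ω; simp [hθ0 ω]
    rwa [hseq] at h0
  -- the fixed point inequalities
  have hI1 : ∀ θ : StopT F T, ∀ᵐ ω ∂μ, J' θ ω + (ξ θ ω : EReal) ≤ J θ ω := by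
    intro θ
    obtain ⟨C, hC, hsup⟩ := hfixJ θ
    set τ : After F T μ θ := ⟨θ, Filter.Eventually.of_forall fun ω => le_rfl⟩ with hτdef
    obtain ⟨hCm, hFm, hG, hident⟩ := hC τ
    have hfm : Measurable[θ.isST.measurableSpace] (fun ω => J' θ ω + (ξ θ ω : EReal)) :=
      measurable_add_coe (hJ'sm.1.1 θ) (hξadm.1 θ).measurable
    have hmax := condExpER_le_max (hmle θ) hfm hCm hFm hG hident
    filter_upwards [hmax, hsup.2.1 τ, hJpos θ] with ω hω h1 h2
    exact hω.trans (max_le h1 h2)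
  have hI2 : ∀ θ : StopT F T, ∀ᵐ ω ∂μ, J θ ω - (ζ θ ω : EReal) ≤ J' θ ω := by
    intro θ
    obtain ⟨C, hC, hsup⟩ := hfixJ' θ
    set σ : After F T μ θ := ⟨θ, Filter.Eventually.of_forall fun ω => le_rfl⟩ with hσdef
    obtain ⟨hCm, hFm, hG, hident⟩ := hC σ
    have heq : (fun ω => J θ ω - (ζ θ ω : EReal))
        = fun ω => J θ ω + ((-(ζ θ ω) : ℝ) : EReal) := by
      funext ω
      rw [sub_eq_add_neg, EReal.coe_neg]
    have hfm : Measurable[θ.isST.measurableSpace] (fun ω => J θ ω - (ζ θ ω : EReal)) := by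
      rw [heq]
      exact measurable_add_coe (hJsm.1.1 θ) (hζadm.1 θ).measurable.neg
    have hmax := condExpER_le_max (hmle θ) hfm hCm hFm hG hident
    filter_upwards [hmax, hsup.2.1 σ, hJ'pos θ] with ω hω h1 h2
    exact hω.trans (max_le h1 h2)
  -- finiteness propagation
  have hstepA : (∀ᵐ ω ∂μ, J θ0 ω < ⊤) → ∀ θ : StopT F T, ∀ᵐ ω ∂μ, J θ ω < ⊤ := by
    intro h0 θ
    obtain ⟨g, ⟨hgm, hFm, hG, hident⟩, hgle⟩ := hJsm.2 θ θ0
      (Filter.Eventually.of_forall fun ω => by rw [hθ0 ω]; exact (θ.mem ω).1)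
    have hglt : ∀ᵐ ω ∂μ, g ω < ⊤ := by
      filter_upwards [hgle, h0] with ω h1 h2
      exact lt_of_le_of_lt h1 h2
    obtain ⟨n, hn⟩ := exists_ae_le_nat' (hmle θ0) h01 hgm hglt
    exact ae_lt_top_of_bounded' ((hJsm.1.1 θ).mono (hmle θ) le_rfl) hn
      (hident Set.univ MeasurableSet.univ)
  have key : (∀ᵐ ω ∂μ, J θ0 ω < ⊤) → ∀ θ : StopT F T, ∀ᵐ ω ∂μ,
      ((ξ θ ω : EReal) ≤ J θ ω - J' θ ω ∧ J θ ω - J' θ ω ≤ (ζ θ ω : EReal)) := by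
    intro h0 θ
    filter_upwards [hI1 θ, hI2 θ, hJpos θ, hJ'pos θ, hstepA h0 θ] with ω h1 h2 h3 h4 h5
    exact ereal_sandwich h1 h2 h3 h4 h5
  have keyξζ : (∀ᵐ ω ∂μ, J θ0 ω < ⊤) → ∀ θ : StopT F T, ∀ᵐ ω ∂μ, ξ θ ω ≤ ζ θ ω := by
    intro h0 θ
    filter_upwards [key h0 θ] with ω h
    exact EReal.coe_le_coe_iff.1 (h.1.trans h.2)
  refine ⟨fun h0 => ⟨key h0, keyξζ h0⟩, ?_⟩
  rintro ⟨ν, hν⟩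
  have hμuniv : μ Set.univ = 1 := by
    rcases hμuniv01 with h | h
    · exact absurd (measure_mono_null (Set.subset_univ _) h) hν
    · exact h
  have hnot : ¬ (∀ᵐ ω ∂μ, J θ0 ω < ⊤) := by
    intro h0
    have h2 := ae_iff.1 (keyξζ h0 ν)
    simp only [not_le] at h2
    exact hν h2
  have hJtop : ∀ᵐ ω ∂μ, J θ0 ω = ⊤ := by
    have hAm : MeasurableSet[θ0.isST.measurableSpace] {ω | J θ0 ω = ⊤} :=
      hJsm.1.1 θ0 (measurableSet_singleton ⊤)
    rcases h01 _ hAm with h | h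
    · exfalso
      refine hnot ?_
      have hne : ∀ᵐ ω ∂μ, ¬ J θ0 ω = ⊤ := ae_iff.2 (by simpa [not_not] using h)
      filter_upwards [hne] with ω hω
      exact lt_top_iff_ne_top.2 hω
    · have hc : μ {ω | J θ0 ω = ⊤}ᶜ = 0 := by
        rw [measure_compl (hmle θ0 _ hAm) (measure_ne_top μ _), hμuniv, h, tsub_self]
      exact ae_iff.2 (by simpa [Set.compl_setOf] using hc)
  refine ⟨hJtop, ?_⟩
  have hA'm : MeasurableSet[θ0.isST.measurableSpace] {ω | J' θ0 ω = ⊤} :=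
    hJ'sm.1.1 θ0 (measurableSet_singleton ⊤)
  rcases h01 _ hA'm with h | h
  · exfalso
    refine hnot ?_
    have hne : ∀ᵐ ω ∂μ, ¬ J' θ0 ω = ⊤ := ae_iff.2 (by simpa [not_not] using h)
    filter_upwards [hne, hI2 θ0] with ω h1 h2
    exact ereal_lt_top_of_sub_le h2 (lt_top_iff_ne_top.2 h1)
  · have hc : μ {ω | J' θ0 ω = ⊤}ᶜ = 0 := by
      rw [measure_compl (hmle θ0 _ hA'm) (measure_ne_top μ _), hμuniv, h, tsub_self]
    exact ae_iff.2 (by simpa [Set.compl_setOf] using hc)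
end

section
/- Let ξ, ζ be admissible families and suppose that for each predictable stopping time τ with τ > 0 a.s., the event {ξ(τ) = ζ(τ)} is a.s. empty. Then for every stopping time θ and every non-decreasing sequence of stopping times (θ_n) with θ_n ↑ θ, one has {ξ(θ) = ζ(θ)} ∩ {θ_n < θ for all n} = ∅ a.s. -/
open MeasureTheory Filter Set
open scoped ENNReal

variable {Ω : Type*}

variable {m0 : MeasurableSpace Ω} (F : Filtration ℝ m0) (T : ℝ) (μ : Measure Ω)

/-- `τ` is a predictable stopping time: it is announced (strictly, monotonically) by a
sequence of stopping times everywhere on `Ω`. -/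
def PredictableStop (τ : StopT F T) : Prop :=
  ∃ Sn : ℕ → StopT F T,
    (∀ n ω, (Sn n).t ω ≤ (Sn (n + 1)).t ω) ∧ (∀ n ω, (Sn n).t ω < τ.t ω) ∧
    ∀ ω, Tendsto (fun n => (Sn n).t ω) atTop (nhds (τ.t ω))

/-- If `{ξ(τ) = ζ(τ)} = ∅` a.s. for every predictable stopping time `τ > 0`, then for
every stopping time `θ` and every nondecreasing sequence `θ_n ↑ θ`, one has
`{ξ(θ) = ζ(θ)} ∩ {θ_n < θ for all n} = ∅` a.s. -/
theorem no_contact_along_increasing_sequences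
    (hT : 0 < T)
    (ξ ζ : StopT F T → Ω → ℝ)
    (hξadm : AdmissibleR F T μ ξ) (hζadm : AdmissibleR F T μ ζ)
    (hsep : ∀ τ : StopT F T, PredictableStop F T τ → (∀ᵐ ω ∂μ, 0 < τ.t ω) →
      ∀ᵐ ω ∂μ, ξ τ ω ≠ ζ τ ω)
    (θ : StopT F T) (θs : ℕ → StopT F T)
    (hmono : ∀ n ω, (θs n).t ω ≤ (θs (n + 1)).t ω)
    (hle : ∀ n ω, (θs n).t ω ≤ θ.t ω)
    (hconv : ∀ ω, Tendsto (fun n => (θs n).t ω) atTop (nhds (θ.t ω))) :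
    ∀ᵐ ω ∂μ, ¬(ξ θ ω = ζ θ ω ∧ ∀ n, (θs n).t ω < θ.t ω) := by
  classical
  -- the announcing levels cₙ ↑ T
  set c : ℕ → ℝ := fun n => T - T / (n + 2) with hc_def
  have hc_nonneg : ∀ n, 0 ≤ c n := by
    intro n
    have h1 : T / ((n:ℝ) + 2) ≤ T := by
      rw [div_le_iff₀ (by positivity)]
      nlinarith [Nat.cast_nonneg (α := ℝ) n]
    simp only [hc_def]; linarith
  have hc_lt : ∀ n, c n < T := by
    intro n
    have : 0 < T / ((n:ℝ) + 2) := by positivity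
    simp only [hc_def]; linarith
  have hc_mono : ∀ n, c n ≤ c (n + 1) := by
    intro n
    have : T / ((n:ℝ) + 1 + 2) ≤ T / (n + 2) := by
      apply div_le_div_of_nonneg_left hT.le (by positivity); linarith
    simp only [hc_def]; push_cast; linarith
  have hc_tendsto : Tendsto c atTop (nhds T) := by
    have h : Tendsto (fun n : ℕ => T / (n + 2)) atTop (nhds 0) := by
      apply Tendsto.div_atTop tendsto_const_nhds
      exact tendsto_atTop_add_const_right _ _ tendsto_natCast_atTop_atTop
    simpa [hc_def] using tendsto_const_nhds.sub h
  -- the sets Aₙ = {θₙ < θ} and A = ⋂ₙ Aₙ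
  set A : Set Ω := {ω | ∀ n, (θs n).t ω < θ.t ω} with hA_def
  have hAn_meas : ∀ n, MeasurableSet[(θs n).isST.measurableSpace]
      {ω | (θs n).t ω < θ.t ω} := by
    intro n
    have h := (IsStoppingTime.measurableSet_stopping_time_le θ.isST (θs n).isST).compl
    have heq : {ω | (θs n).t ω < θ.t ω} = {ω | θ.t ω ≤ (θs n).t ω}ᶜ := by
      ext ω; simp [not_le]
    rw [heq]; simpa only [WithTop.coe_le_coe] using h
  have hA_meas : MeasurableSet[θ.isST.measurableSpace] A := by
    have : A = ⋂ n, {ω | (θs n).t ω < θ.t ω} := by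
      ext ω; simp [hA_def]
    rw [this]
    exact MeasurableSet.iInter fun n =>
      (θs n).isST.measurableSpace_mono θ.isST (fun ω => WithTop.coe_le_coe.mpr (hle n ω)) _ (hAn_meas n)
  -- monotone sequence: once θₙ catches θ it stays equal
  have hcatch : ∀ (ω : Ω) n, ¬ ((θs n).t ω < θ.t ω) → ∀ m, n ≤ m → ¬ ((θs m).t ω < θ.t ω) := by
    intro ω n hn m hm
    have hmono' : Monotone fun k => (θs k).t ω := monotone_nat_of_le_succ fun k => hmono k ω
    have : (θs n).t ω ≤ (θs m).t ω := hmono' hm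
    push_neg at hn ⊢
    linarith
  -- the predictable stopping time τ
  have hθs_nonneg : ∀ n ω, 0 ≤ (θs n).t ω := fun n ω => ((θs n).mem ω).1
  have hθ_mem : ∀ ω, θ.t ω ∈ Set.Icc (0:ℝ) T := θ.mem
  set τt : Ω → ℝ := fun ω => if ω ∈ A then θ.t ω else T with hτt_def
  have hτ_isST : IsStoppingTime F (fun ω => (τt ω : WithTop ℝ)) := by
    intro i
    simp only [WithTop.coe_le_coe]
    by_cases hi : T ≤ i
    · have : {ω | τt ω ≤ i} = Set.univ := by
        ext ω; simp only [Set.mem_setOf_eq, Set.mem_univ, iff_true, hτt_def]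
        split_ifs with h
        · exact le_trans (hθ_mem ω).2 hi
        · exact hi
      rw [this]; exact MeasurableSet.univ
    · have : {ω | τt ω ≤ i} = A ∩ {ω | θ.t ω ≤ i} := by
        ext ω
        simp only [Set.mem_setOf_eq, Set.mem_inter_iff, hτt_def]
        split_ifs with h
        · simp [h]
        · simp [h, hi]
      rw [this]
      simpa only [WithTop.coe_le_coe] using ((θ.isST.measurableSet A).mp hA_meas).2 i
  set τ : StopT F T := ⟨τt, hτ_isST, by
    intro ω
    simp only [hτt_def]
    split_ifs with h
    · exact hθ_mem ω
    · exact ⟨hT.le, le_rfl⟩⟩ with hτ_def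
  -- the announcing sequence Sₙ
  have hSn_isST : ∀ n, IsStoppingTime F
      (fun ω => ((if (θs n).t ω < θ.t ω then min ((θs n).t ω) (c n) else c n : ℝ) : WithTop ℝ)) := by
    intro n i
    simp only [WithTop.coe_le_coe]
    by_cases hi : c n ≤ i
    · have : {ω | (if (θs n).t ω < θ.t ω then min ((θs n).t ω) (c n) else c n) ≤ i}
          = Set.univ := by
        ext ω; simp only [Set.mem_setOf_eq, Set.mem_univ, iff_true]
        split_ifs with h
        · exact le_trans (min_le_right _ _) hi
        · exact hi
      rw [this]; exact MeasurableSet.univ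
    · have : {ω | (if (θs n).t ω < θ.t ω then min ((θs n).t ω) (c n) else c n) ≤ i}
          = {ω | (θs n).t ω < θ.t ω} ∩ {ω | (θs n).t ω ≤ i} := by
        ext ω
        simp only [Set.mem_setOf_eq, Set.mem_inter_iff]
        split_ifs with h
        · simp only [h, true_and, min_le_iff]
          exact ⟨fun hh => hh.resolve_right (by linarith), Or.inl⟩
        · simp [h, hi]
      rw [this]
      simpa only [WithTop.coe_le_coe] using (((θs n).isST.measurableSet _).mp (hAn_meas n)).2 i
  set Sn : ℕ → StopT F T := fun n =>
    ⟨fun ω => if (θs n).t ω < θ.t ω then min ((θs n).t ω) (c n) else c n, hSn_isST n, by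
      intro ω
      split_ifs with h
      · exact ⟨le_min (hθs_nonneg n ω) (hc_nonneg n), le_trans (min_le_left _ _)
          ((θs n).mem ω).2⟩
      · exact ⟨hc_nonneg n, (hc_lt n).le⟩⟩ with hSn_def
  -- τ is predictable
  have hpred : PredictableStop F T τ := by
    refine ⟨Sn, ?_, ?_, ?_⟩
    · intro n ω
      simp only [hSn_def]
      by_cases h1 : (θs (n+1)).t ω < θ.t ω
      · have h0 : (θs n).t ω < θ.t ω := lt_of_le_of_lt (hmono n ω) h1
        rw [if_pos h0, if_pos h1]
        exact min_le_min (hmono n ω) (hc_mono n)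
      · rw [if_neg h1]
        split_ifs with h0
        · exact le_trans (min_le_right _ _) (hc_mono n)
        · exact hc_mono n
    · intro n ω
      simp only [hSn_def, hτ_def]
      by_cases hωA : ω ∈ A
      · have h0 : (θs n).t ω < θ.t ω := hωA n
        simp only [hτt_def, if_pos hωA, if_pos h0]
        exact lt_of_le_of_lt (min_le_left _ _) h0
      · simp only [hτt_def, if_neg hωA]
        split_ifs with h0
        · exact lt_of_le_of_lt (min_le_right _ _) (hc_lt n)
        · exact hc_lt n
    · intro ω
      by_cases hωA : ω ∈ A
      · have hτω : τ.t ω = θ.t ω := by simp only [hτ_def, hτt_def, if_pos hωA]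
        have heq : (fun n => (Sn n).t ω) = fun n => min ((θs n).t ω) (c n) := by
          funext n; simp only [hSn_def, if_pos (hωA n)]
        rw [hτω, heq]
        have := (hconv ω).min hc_tendsto
        simpa [min_eq_left (hθ_mem ω).2] using this
      · have hτω : τ.t ω = T := by simp only [hτ_def, hτt_def, if_neg hωA]
        rw [hτω]
        simp only [hA_def, Set.mem_setOf_eq, not_forall] at hωA
        obtain ⟨N, hN⟩ := hωA
        apply hc_tendsto.congr'
        filter_upwards [eventually_ge_atTop N] with n hn
        simp only [hSn_def, if_neg (hcatch ω N hN n hn)]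
  have hpos : ∀ᵐ ω ∂μ, 0 < τ.t ω := by
    filter_upwards with ω
    simp only [hτ_def, hτt_def]
    split_ifs with h
    · exact lt_of_le_of_lt (hθs_nonneg 0 ω) (h 0)
    · exact hT
  -- conclude
  filter_upwards [hsep τ hpred hpos, hξadm.2 τ θ, hζadm.2 τ θ] with ω hne hξ hζ
  rintro ⟨heq, hA⟩
  have hωA : ω ∈ A := hA
  have hτθ : τ.t ω = θ.t ω := by simp only [hτ_def, hτt_def, if_pos hωA]
  exact hne ((hξ hτθ).trans (heq.trans (hζ hτθ).symm))
end
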